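/- For every positive integer a, every natural number n, and every real x with cos x ≠ 0, the n-th derivative of the function x ↦ (cos x)^{−a} at x equals Q_n^{(a)}(tan x)·(cos x)^{−a}, i.e. iteratedDeriv n (fun x => (cos x)^(−a : ℤ)) x = Q_n^{(a)}(tan x)·(cos x)^{−a}. -/

import Mathlib

open Polynomial Real

/-- The derivative polynomials `Q_n^{(a)}`:
`Q_0^{(a)} = 1`, `Q_{n+1}^{(a)} = (1+t²)·(Q_n^{(a)})' + a·t·Q_n^{(a)}`. -/
noncomputable def polyQ (a : ℝ) : ℕ → Polynomial ℝ
  | 0 => 1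
  | n + 1 => (1 + X ^ 2) * derivative (polyQ a n) + C a * X * polyQ a n

lemma key (a : ℕ) (n : ℕ) (x : ℝ) (hx : Real.cos x ≠ 0) :
    HasDerivAt (fun y => (polyQ (a : ℝ) n).eval (Real.tan y) * Real.cos y ^ (-(a : ℤ)))
      ((polyQ (a : ℝ) (n+1)).eval (Real.tan x) * Real.cos x ^ (-(a : ℤ))) x := by
  have h1 : HasDerivAt (fun y => (polyQ (a : ℝ) n).eval (Real.tan y))
      ((derivative (polyQ (a : ℝ) n)).eval (Real.tan x) * (1 / Real.cos x ^ 2)) x :=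
    ((polyQ (a : ℝ) n).hasDerivAt (Real.tan x)).comp x (Real.hasDerivAt_tan hx)
  have h2 := (hasDerivAt_zpow (-(a : ℤ)) (Real.cos x) (Or.inl hx)).comp x
    (Real.hasDerivAt_cos x)
  have := h1.mul h2
  convert this using 1
  · rfl
  · rfl
  · rfl
  have ht : (1 + Real.tan x ^ 2) = (Real.cos x ^ 2)⁻¹ := by
    rw [← Real.inv_one_add_tan_sq hx, inv_inv]
  simp only [polyQ, eval_add, eval_mul, eval_C, eval_X, eval_pow, eval_one, Function.comp,
    zpow_sub_one₀ hx, Real.tan_eq_sin_div_cos, ht]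
  push_cast
  field_simp
  rw [Real.sin_sq x]
  ring

theorem stmt1 (a : ℕ) (ha : 0 < a) (n : ℕ) (x : ℝ) (hx : Real.cos x ≠ 0) :
    iteratedDeriv n (fun y => Real.cos y ^ (-(a : ℤ))) x
      = (polyQ (a : ℝ) n).eval (Real.tan x) * Real.cos x ^ (-(a : ℤ)) := by
  induction n generalizing x with
  | zero => simp [polyQ]
  | succ n ih =>
    rw [iteratedDeriv_succ]
    have hev : ∀ᶠ y in nhds x, Real.cos y ≠ 0 :=
      Real.continuous_cos.continuousAt.eventually_ne hx
    have heq : iteratedDeriv n (fun y => Real.cos y ^ (-(a : ℤ)))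
        =ᶠ[nhds x] fun y => (polyQ (a : ℝ) n).eval (Real.tan y) * Real.cos y ^ (-(a : ℤ)) :=
      hev.mono fun y hy => ih y hy
    rw [heq.deriv_eq]
    exact (key a n x hx).deriv
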